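/- Suppose that for each t ∈ [0,T] one has e^{-rt}c(t)G(t) = E_Q[e^{-rT}G(T) | F_t] Q-a.s. Then the discounted defaultable bond price process is a (G_t)_{t∈[0,T]}-martingale under Q: writing D(t) := c(t)·1_{{t<τ}} (so that D(T) = 1_{{T<τ}}), for every t ∈ [0,T] one has e^{-rt}D(t) = E_Q[e^{-rT}D(T) | G_t] Q-a.s. -/

import Mathlib

open MeasureTheory

/-- Let `(Ω, Σ)` be a measurable space with a filtration `(F_t)_{t∈[0,T]}`,
`T > 0`, `r ≥ 0`, and let `τ : Ω → (0,∞)` be a random variable with `{τ ≤ u} ∈ Σ` for all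
`u`. For `t ∈ [0,T]` set `I_t := σ({τ ≤ u} : u ∈ [0,t])` and `G_t := σ(F_t ∪ I_t)`. Let
`Q` be a probability measure on `G_T`. Let `c = (c(t))_{t∈[0,T]}` be an `(F_t)`-adapted
process with values in `(0,1]` and `c(T) = 1`, and let `G = (G(t))_{t∈[0,T]}` be a process
with values in `(0,1]` such that each `G(t)` is `F_t`-measurable and is a version of
`Q(t < τ | F_T)`.  Suppose that for each `t ∈ [0,T]` one has
`e^{-rt}c(t)G(t) = E_Q[e^{-rT}G(T) | F_t]` `Q`-a.s.  Then, writing `D(t) := c(t)·1_{t<τ}`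
(so that `D(T) = 1_{T<τ}`), for every `t ∈ [0,T]` one has
`e^{-rt}D(t) = E_Q[e^{-rT}D(T) | G_t]` `Q`-a.s. -/
theorem stmt5 {Ω : Type*} {mΩ : MeasurableSpace Ω} (T r : ℝ) (hT : 0 < T) (hr : 0 ≤ r)
    (F : ℝ → MeasurableSpace Ω)
    (hF_mono : ∀ s t : ℝ, 0 ≤ s → s ≤ t → t ≤ T → F s ≤ F t)
    (hF_le : ∀ t ∈ Set.Icc (0 : ℝ) T, F t ≤ mΩ)
    (τ : Ω → ℝ) (hτ_pos : ∀ ω, 0 < τ ω)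
    (hτ_meas : ∀ u : ℝ, MeasurableSet {ω | τ ω ≤ u})
    (GG : ℝ → MeasurableSpace Ω)
    (hGG : ∀ t, GG t = F t ⊔ MeasurableSpace.generateFrom
      {A | ∃ u : ℝ, 0 ≤ u ∧ u ≤ t ∧ A = {ω | τ ω ≤ u}})
    (Q : @Measure Ω (GG T)) (hQ : @IsProbabilityMeasure Ω (GG T) Q)
    (c : ℝ → Ω → ℝ)
    (hc_adapted : ∀ t ∈ Set.Icc (0 : ℝ) T, Measurable[F t] (c t))
    (hc_mem : ∀ t ∈ Set.Icc (0 : ℝ) T, ∀ ω, c t ω ∈ Set.Ioc (0 : ℝ) 1)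
    (hc_T : ∀ ω, c T ω = 1)
    (G : ℝ → Ω → ℝ)
    (hG_mem : ∀ t ∈ Set.Icc (0 : ℝ) T, ∀ ω, G t ω ∈ Set.Ioc (0 : ℝ) 1)
    (hG_meas : ∀ t ∈ Set.Icc (0 : ℝ) T, Measurable[F t] (G t))
    (hG_version : ∀ t ∈ Set.Icc (0 : ℝ) T, ∀ A : Set Ω, MeasurableSet[F T] A →
      ∫ ω in A, G t ω ∂Q = (Q (A ∩ {ω | t < τ ω})).toReal)
    (hmart : ∀ t ∈ Set.Icc (0 : ℝ) T,
      (fun ω => Real.exp (-(r * t)) * (c t ω * G t ω)) =ᵐ[Q]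
        Q[fun ω => Real.exp (-(r * T)) * G T ω | F t]) :
    ∀ t ∈ Set.Icc (0 : ℝ) T,
      (fun ω => Real.exp (-(r * t)) *
          Set.indicator {ω | t < τ ω} (fun ω => c t ω) ω) =ᵐ[Q]
        Q[fun ω => Real.exp (-(r * T)) *
          Set.indicator {ω | T < τ ω} (fun ω => c T ω) ω | GG t] := by
  intro t ht
  obtain ⟨ht0, htT⟩ := ht
  letI : MeasurableSpace Ω := GG T
  haveI : IsProbabilityMeasure Q := hQ
  -- basic sigma-algebra inclusions
  have hFT_le : F T ≤ GG T := by rw [hGG]; exact le_sup_left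
  have hFt_le : F t ≤ GG T := (hF_mono t T ht0 htT le_rfl).trans hFT_le
  have hτ_set : ∀ u : ℝ, 0 ≤ u → u ≤ T → MeasurableSet[GG T] {ω | τ ω ≤ u} := by
    intro u h0 h1
    have h2 : MeasurableSpace.generateFrom
        {A | ∃ u : ℝ, 0 ≤ u ∧ u ≤ T ∧ A = {ω | τ ω ≤ u}} ≤ GG T := by
      rw [hGG]; exact le_sup_right
    exact h2 _ (MeasurableSpace.measurableSet_generateFrom ⟨u, h0, h1, rfl⟩)
  have hlt_eq : ∀ s : ℝ, {ω | s < τ ω} = {ω | τ ω ≤ s}ᶜ := by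
    intro s; ext ω; simp [not_le]
  have hτ_lt : ∀ u : ℝ, 0 ≤ u → u ≤ T → MeasurableSet[GG T] {ω | u < τ ω} := by
    intro u h0 h1; rw [hlt_eq]; exact (hτ_set u h0 h1).compl
  have hGGt_le : GG t ≤ GG T := by
    rw [hGG, hGG]
    refine sup_le ((hF_mono t T ht0 htT le_rfl).trans le_sup_left) ?_
    refine le_trans (MeasurableSpace.generateFrom_mono ?_) le_sup_right
    rintro A ⟨u, h0, h1, rfl⟩
    exact ⟨u, h0, h1.trans htT, rfl⟩
  have hFt_GGt : F t ≤ GG t := by rw [hGG]; exact le_sup_left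
  haveI hsf : SigmaFinite (Q.trim hFT_le) := by infer_instance
  haveI hsf2 : SigmaFinite (Q.trim hFt_le) := by infer_instance
  haveI hsf3 : SigmaFinite (Q.trim hGGt_le) := by infer_instance
  -- integrability of bounded measurable functions
  have hbdd_int : ∀ f : Ω → ℝ, Measurable[GG T] f → (∀ ω, ‖f ω‖ ≤ 1) → Integrable f Q := by
    intro f hf hb
    exact (integrable_const (1 : ℝ)).mono' hf.stronglyMeasurable.aestronglyMeasurable
      (ae_of_all _ hb)
  -- the indicator of {s < τ}
  set J : ℝ → Ω → ℝ := fun s => Set.indicator {ω | s < τ ω} (fun _ => (1 : ℝ)) with hJ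
  have hJ_meas : ∀ s : ℝ, 0 ≤ s → s ≤ T → Measurable[GG T] (J s) := by
    intro s h0 h1
    exact (measurable_const.indicator (hτ_lt s h0 h1))
  have hJ_bdd : ∀ s ω, ‖J s ω‖ ≤ 1 := by
    intro s ω
    refine le_trans (norm_indicator_le_norm_self _ _) (by norm_num)
  have hJ_int : ∀ s : ℝ, 0 ≤ s → s ≤ T → Integrable (J s) Q := fun s h0 h1 =>
    hbdd_int _ (hJ_meas s h0 h1) (hJ_bdd s)
  have hG_bdd : ∀ s : ℝ, 0 ≤ s → s ≤ T → ∀ ω, ‖G s ω‖ ≤ 1 := by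
    intro s h0 h1 ω
    have := hG_mem s ⟨h0, h1⟩ ω
    rw [Real.norm_eq_abs, abs_of_pos this.1]
    exact this.2
  have hG_int : ∀ s : ℝ, 0 ≤ s → s ≤ T → Integrable (G s) Q := by
    intro s h0 h1
    exact hbdd_int _ ((hG_meas s ⟨h0, h1⟩).mono ((hF_mono s T h0 h1 le_rfl).trans hFT_le) le_rfl)
      (hG_bdd s h0 h1)
  -- G s is a version of the conditional expectation of J s given F T
  have hGcond : ∀ s : ℝ, 0 ≤ s → s ≤ T → G s =ᵐ[Q] Q[J s | F T] := by
    intro s h0 h1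
    refine ae_eq_condExp_of_forall_setIntegral_eq hFT_le (hJ_int s h0 h1) ?_ ?_ ?_
    · intro A hA _; exact (hG_int s h0 h1).integrableOn
    · intro A hA _
      rw [hG_version s ⟨h0, h1⟩ A hA, hJ]
      rw [setIntegral_indicator (μ := Q) (hτ_lt s h0 h1), setIntegral_const, smul_eq_mul, mul_one, Measure.real]
    · exact StronglyMeasurable.aestronglyMeasurable
        (((hG_meas s ⟨h0, h1⟩).mono (hF_mono s T h0 h1 le_rfl) le_rfl).stronglyMeasurable)
  -- key identity: for bounded F_T-measurable f, ∫ f·J s = ∫ f·G s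
  have key : ∀ s : ℝ, 0 ≤ s → s ≤ T → ∀ f : Ω → ℝ, Measurable[F T] f → (∀ ω, ‖f ω‖ ≤ 1) →
      ∫ ω, f ω * J s ω ∂Q = ∫ ω, f ω * G s ω ∂Q := by
    intro s h0 h1 f hf hfb
    have hfm : Measurable[GG T] f := hf.mono hFT_le le_rfl
    have hfsm : StronglyMeasurable[F T] f := hf.stronglyMeasurable
    have hint : Integrable (fun ω => f ω * J s ω) Q :=
      (hJ_int s h0 h1).bdd_mul hfm.stronglyMeasurable.aestronglyMeasurable (ae_of_all _ hfb)
    have h2 : Q[fun ω => f ω * J s ω | F T] =ᵐ[Q] fun ω => f ω * (Q[J s | F T]) ω := by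
      have := condExp_stronglyMeasurable_mul_of_bound hFT_le hfsm (hJ_int s h0 h1) 1
        (ae_of_all _ hfb)
      exact this
    calc ∫ ω, f ω * J s ω ∂Q = ∫ ω, (Q[fun ω => f ω * J s ω | F T]) ω ∂Q :=
          (integral_condExp hFT_le).symm
      _ = ∫ ω, f ω * (Q[J s | F T]) ω ∂Q := integral_congr_ae h2
      _ = ∫ ω, f ω * G s ω ∂Q := by
          refine integral_congr_ae ?_
          filter_upwards [hGcond s h0 h1] with ω hω
          rw [hω]
  -- set-restricted version
  have key' : ∀ s : ℝ, 0 ≤ s → s ≤ T → ∀ f : Ω → ℝ, Measurable[F T] f → (∀ ω, ‖f ω‖ ≤ 1) →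
      ∀ B : Set Ω, MeasurableSet[F T] B →
      ∫ ω in B, f ω * J s ω ∂Q = ∫ ω in B, f ω * G s ω ∂Q := by
    intro s h0 h1 f hf hfb B hB
    have hB' : MeasurableSet[GG T] B := hFT_le _ hB
    have e1 : ∫ ω in B, f ω * J s ω ∂Q = ∫ ω, (B.indicator f) ω * J s ω ∂Q := by
      rw [← integral_indicator (μ := Q) hB']
      congr 1
      funext ω
      rw [Set.indicator_mul_left]
    have e2 : ∫ ω in B, f ω * G s ω ∂Q = ∫ ω, (B.indicator f) ω * G s ω ∂Q := by
      rw [← integral_indicator (μ := Q) hB']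
      congr 1
      funext ω
      rw [Set.indicator_mul_left]
    rw [e1, e2]
    exact key s h0 h1 (B.indicator f) (hf.indicator hB)
      (fun ω => le_trans (norm_indicator_le_norm_self _ _) (hfb ω))
  -- abbreviations for the two sides
  set X : Ω → ℝ := fun ω => Real.exp (-(r * t)) * Set.indicator {ω | t < τ ω} (fun ω => c t ω) ω
    with hX
  set Y : Ω → ℝ := fun ω => Real.exp (-(r * T)) * Set.indicator {ω | T < τ ω} (fun ω => c T ω) ω
    with hY
  have hexp_le : ∀ s : ℝ, 0 ≤ s → Real.exp (-(r * s)) ≤ 1 := by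
    intro s h0
    rw [Real.exp_le_one_iff]
    simp only [neg_nonpos]
    exact mul_nonneg hr h0
  have hexp_pos : ∀ s : ℝ, 0 < Real.exp (-(r * s)) := fun s => Real.exp_pos _
  have hc_bdd : ∀ ω, ‖c t ω‖ ≤ 1 := by
    intro ω
    have := hc_mem t ⟨ht0, htT⟩ ω
    rw [Real.norm_eq_abs, abs_of_pos this.1]
    exact this.2
  -- rewrite X and Y through J
  have hXeq : ∀ ω, X ω = (Real.exp (-(r * t)) * c t ω) * J t ω := by
    intro ω
    by_cases h : ω ∈ {ω | t < τ ω} <;>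
      simp [hX, hJ, h, Set.indicator_of_mem, Set.indicator_of_notMem, mul_assoc]
  have hYeq : ∀ ω, Y ω = Real.exp (-(r * T)) * J T ω := by
    intro ω
    by_cases h : ω ∈ {ω | T < τ ω} <;>
      simp [hY, hJ, h, Set.indicator_of_mem, Set.indicator_of_notMem, hc_T]
  -- measurability and integrability of X and Y
  have hgen_t_le : MeasurableSpace.generateFrom
      {A | ∃ u : ℝ, 0 ≤ u ∧ u ≤ t ∧ A = {ω | τ ω ≤ u}} ≤ GG t := by
    rw [hGG]; exact le_sup_right
  have hτt_GGt : MeasurableSet[GG t] {ω | t < τ ω} := by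
    rw [hlt_eq]
    exact (hgen_t_le _ (MeasurableSpace.measurableSet_generateFrom ⟨t, ht0, le_rfl, rfl⟩)).compl
  have hX_meas_t : Measurable[GG t] X :=
    measurable_const.mul (((hc_adapted t ⟨ht0, htT⟩).mono hFt_GGt le_rfl).indicator hτt_GGt)
  have hX_bdd : ∀ ω, ‖X ω‖ ≤ 1 := by
    intro ω
    rw [hX]
    simp only [norm_mul]
    calc ‖Real.exp (-(r * t))‖ * ‖Set.indicator {ω | t < τ ω} (fun ω => c t ω) ω‖
        ≤ 1 * 1 := by
          refine mul_le_mul ?_ ?_ (norm_nonneg _) zero_le_one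
          · rw [Real.norm_eq_abs, abs_of_pos (hexp_pos t)]; exact hexp_le t ht0
          · exact le_trans (norm_indicator_le_norm_self _ _) (hc_bdd ω)
      _ = 1 := one_mul 1
  have hX_int : Integrable X Q := hbdd_int X (hX_meas_t.mono hGGt_le le_rfl) hX_bdd
  have hY_bdd : ∀ ω, ‖Y ω‖ ≤ 1 := by
    intro ω
    rw [hYeq ω]
    simp only [norm_mul]
    calc ‖Real.exp (-(r * T))‖ * ‖J T ω‖ ≤ 1 * 1 := by
          refine mul_le_mul ?_ (hJ_bdd T ω) (norm_nonneg _) zero_le_one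
          rw [Real.norm_eq_abs, abs_of_pos (hexp_pos T)]; exact hexp_le T hT.le
      _ = 1 := one_mul 1
  have hY_meas : Measurable[GG T] Y := by
    have : Y = fun ω => Real.exp (-(r * T)) * J T ω := funext hYeq
    rw [this]
    exact measurable_const.mul (hJ_meas T hT.le le_rfl)
  have hY_int : Integrable Y Q := hbdd_int Y hY_meas hY_bdd
  -- the π-system generating GG t
  set P : Set (Set Ω) := {A | MeasurableSet[F t] A ∨
    ∃ B u, MeasurableSet[F t] B ∧ 0 ≤ u ∧ u ≤ t ∧ A = B ∩ {ω | τ ω ≤ u}} with hP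
  have hpi : IsPiSystem P := by
    rintro A (hA | ⟨B, u, hB, hu0, hut, rfl⟩) A' (hA' | ⟨B', v, hB', hv0, hvt, rfl⟩) _
    · exact Or.inl (hA.inter hA')
    · refine Or.inr ⟨A ∩ B', v, hA.inter hB', hv0, hvt, ?_⟩
      rw [Set.inter_assoc]
    · refine Or.inr ⟨B ∩ A', u, hB.inter hA', hu0, hut, ?_⟩
      ext ω; simp only [Set.mem_inter_iff]; tauto
    · refine Or.inr ⟨B ∩ B', min u v, hB.inter hB', le_min hu0 hv0,
        (min_le_left u v).trans hut, ?_⟩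
      ext ω
      simp only [Set.mem_inter_iff, Set.mem_setOf_eq, le_min_iff]
      tauto
  have hgen : GG t = MeasurableSpace.generateFrom P := by
    refine le_antisymm ?_ ?_
    · rw [hGG]
      refine sup_le ?_ ?_
      · intro A hA
        exact MeasurableSpace.measurableSet_generateFrom (Or.inl hA)
      · refine MeasurableSpace.generateFrom_le ?_
        rintro A ⟨u, hu0, hut, rfl⟩
        exact MeasurableSpace.measurableSet_generateFrom
          (Or.inr ⟨Set.univ, u, MeasurableSet.univ, hu0, hut, (Set.univ_inter _).symm⟩)
    · refine MeasurableSpace.generateFrom_le ?_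
      rintro A (hA | ⟨B, u, hB, hu0, hut, rfl⟩)
      · exact hFt_GGt _ hA
      · exact (hFt_GGt _ hB).inter
          (hgen_t_le _ (MeasurableSpace.measurableSet_generateFrom ⟨u, hu0, hut, rfl⟩))
  -- the basic computation for sets in F t
  have hbasicF : ∀ A : Set Ω, MeasurableSet[F t] A →
      ∫ ω in A, X ω ∂Q = ∫ ω in A, Y ω ∂Q := by
    intro A hAm
    have hAT : MeasurableSet[F T] A := hF_mono t T ht0 htT le_rfl _ hAm
    have hA' : MeasurableSet[GG T] A := hFt_le _ hAm
    have hf1 : Measurable[F T] (fun ω => Real.exp (-(r * t)) * c t ω) :=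
      measurable_const.mul ((hc_adapted t ⟨ht0, htT⟩).mono
        (hF_mono t T ht0 htT le_rfl) le_rfl)
    have hf1b : ∀ ω, ‖Real.exp (-(r * t)) * c t ω‖ ≤ 1 := by
      intro ω
      rw [norm_mul]
      calc ‖Real.exp (-(r * t))‖ * ‖c t ω‖ ≤ 1 * 1 := by
            refine mul_le_mul ?_ (hc_bdd ω) (norm_nonneg _) zero_le_one
            rw [Real.norm_eq_abs, abs_of_pos (hexp_pos t)]; exact hexp_le t ht0
        _ = 1 := one_mul 1
    have hGT_int : Integrable (fun ω => Real.exp (-(r * T)) * G T ω) Q :=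
      (hG_int T hT.le le_rfl).const_mul _
    calc ∫ ω in A, X ω ∂Q
          = ∫ ω in A, (Real.exp (-(r * t)) * c t ω) * J t ω ∂Q := by
            exact setIntegral_congr_fun (μ := Q) hA' (fun ω _ => hXeq ω)
      _ = ∫ ω in A, (Real.exp (-(r * t)) * c t ω) * G t ω ∂Q :=
            key' t ht0 htT _ hf1 hf1b A hAT
      _ = ∫ ω in A, Real.exp (-(r * t)) * (c t ω * G t ω) ∂Q := by
            refine setIntegral_congr_fun (μ := Q) hA' (fun ω _ => ?_)
            ring
      _ = ∫ ω in A, (Q[fun ω => Real.exp (-(r * T)) * G T ω | F t]) ω ∂Q := by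
            refine setIntegral_congr_ae (μ := Q) hA' ?_
            filter_upwards [hmart t ⟨ht0, htT⟩] with ω hω
            intro _
            exact hω
      _ = ∫ ω in A, Real.exp (-(r * T)) * G T ω ∂Q :=
            setIntegral_condExp hFt_le hGT_int hAm
      _ = ∫ ω in A, Real.exp (-(r * T)) * J T ω ∂Q := by
            refine (key' T hT.le le_rfl (fun _ => Real.exp (-(r * T)))
              measurable_const (fun ω => by
                rw [Real.norm_eq_abs, abs_of_pos (hexp_pos T)]; exact hexp_le T hT.le)
              A hAT).symm
      _ = ∫ ω in A, Y ω ∂Q := by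
            exact setIntegral_congr_fun (μ := Q) hA' (fun ω _ => (hYeq ω).symm)
  have huniv : ∫ ω, X ω ∂Q = ∫ ω, Y ω ∂Q := by
    have := hbasicF Set.univ MeasurableSet.univ
    simpa [Measure.restrict_univ] using this
  -- the main set-integral identity on GG t
  have main : ∀ A : Set Ω, MeasurableSet[GG t] A → ∫ ω in A, X ω ∂Q = ∫ ω in A, Y ω ∂Q := by
    intro A hA
    refine MeasurableSpace.induction_on_inter (m := GG t)
      (C := fun A _ => ∫ ω in A, X ω ∂Q = ∫ ω in A, Y ω ∂Q) hgen hpi (by simp) ?_ ?_ ?_ A hA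
    · -- basic sets
      rintro A (hAm | ⟨B, u, hB, hu0, hut, rfl⟩)
      · exact hbasicF A hAm
      · -- A = B ∩ {τ ≤ u}, u ≤ t : both sides vanish
        have hz1 : ∫ ω in B ∩ {ω | τ ω ≤ u}, X ω ∂Q = 0 := by
          refine setIntegral_eq_zero_of_forall_eq_zero (μ := Q) ?_
          rintro ω ⟨-, hω⟩
          have : ¬ t < τ ω := not_lt.mpr (le_trans hω hut)
          simp [hX, Set.indicator_of_notMem, this]
        have hz2 : ∫ ω in B ∩ {ω | τ ω ≤ u}, Y ω ∂Q = 0 := by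
          refine setIntegral_eq_zero_of_forall_eq_zero (μ := Q) ?_
          rintro ω ⟨-, hω⟩
          have : ¬ T < τ ω := not_lt.mpr (le_trans hω (hut.trans htT))
          simp [hY, Set.indicator_of_notMem, this]
        rw [hz1, hz2]
    · -- complements
      intro A hAm hA
      have hA' : MeasurableSet[GG T] A := hGGt_le _ hAm
      have e1 := integral_add_compl (μ := Q) hA' hX_int
      have e2 := integral_add_compl (μ := Q) hA' hY_int
      linarith [e1, e2, hA, huniv]
    · -- disjoint unions
      intro f hdisj hmeas hint
      have hmeas' : ∀ i, MeasurableSet[GG T] (f i) := fun i => hGGt_le _ (hmeas i)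
      rw [integral_iUnion (μ := Q) hmeas' hdisj hX_int.integrableOn,
        integral_iUnion (μ := Q) hmeas' hdisj hY_int.integrableOn]
      exact tsum_congr hint
  -- conclude via uniqueness of conditional expectation
  refine ae_eq_condExp_of_forall_setIntegral_eq hGGt_le hY_int
    (fun A hA _ => hX_int.integrableOn) (fun A hA _ => main A hA) ?_
  exact StronglyMeasurable.aestronglyMeasurable hX_meas_t.stronglyMeasurable
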